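/- Let δ > 0 and let φ_δ be the transition function. Let p±(x,y,w) = a±₂₀₀x² + a±₀₂₀y² + a±₀₀₂w² + a±₁₁₀xy + a±₁₀₁xw + a±₀₁₁yw, q± = b±, r± = c± with real coefficients, and let M_δ be the Malkin bifurcation function for h(cos s, sin s) = cos s and ς = (cos s, sin s, z + sin s). Then: (i) ∫₀^{2π} cos²s · sin s · φ_δ(sin s) ds > 0; (ii) M_δ is an affine function of z, with M_δ(z) − M_δ(0) = −(z/2)(a⁺₁₀₁ − a⁻₁₀₁) ∫₀^{2π} cos²s · sin s · φ_δ(sin s) ds; (iii) consequently, if a⁺₁₀₁ ≠ a⁻₁₀₁ then M_δ has exactly one zero z₀ and M_δ'(z₀) ≠ 0. -/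

import Mathlib

/-- The transition function φ_δ of the regularization process. -/
noncomputable def phiTrans (δ t : ℝ) : ℝ :=
  if t ≤ -δ then -1 else if t < δ then t / δ else 1


lemma phiTrans_eq (δ : ℝ) (hδ : 0 < δ) (t : ℝ) :
    phiTrans δ t = max (-1) (min 1 (t / δ)) := by
  unfold phiTrans
  rcases le_or_gt t (-δ) with h | h
  · rw [if_pos h]
    have h1 : t / δ ≤ -1 := by rw [div_le_iff₀ hδ]; linarith
    rw [min_eq_right (by linarith), max_eq_left h1]
  · rw [if_neg (not_le.2 h)]
    rcases lt_or_ge t δ with h2 | h2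
    · rw [if_pos h2]
      have ha : -1 < t / δ := by rw [lt_div_iff₀ hδ]; linarith
      have hb : t / δ < 1 := by rw [div_lt_iff₀ hδ]; linarith
      rw [min_eq_right hb.le, max_eq_right ha.le]
    · rw [if_neg (not_lt.2 h2)]
      have h3 : (1:ℝ) ≤ t / δ := by rw [le_div_iff₀ hδ]; linarith
      rw [min_eq_left h3, max_eq_right (by linarith)]

lemma phiTrans_cont (δ : ℝ) (hδ : 0 < δ) : Continuous (phiTrans δ) := by
  have : phiTrans δ = fun t => max (-1) (min 1 (t / δ)) := funext (phiTrans_eq δ hδ)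
  rw [this]
  exact continuous_const.max (continuous_const.min (continuous_id.div_const δ))

lemma phiTrans_pos (δ t : ℝ) (hδ : 0 < δ) (ht : 0 < t) : 0 < phiTrans δ t := by
  unfold phiTrans
  rw [if_neg (by linarith)]
  split
  · positivity
  · norm_num

lemma mul_phiTrans_nonneg (δ t : ℝ) (hδ : 0 < δ) : 0 ≤ t * phiTrans δ t := by
  unfold phiTrans
  split
  · nlinarith
  · split
    · rename_i h1 h2
      have : t * (t / δ) = t ^ 2 / δ := by ring
      rw [this]; positivity
    · nlinarith

lemma integral_cos_mul_comp_sin {g : ℝ → ℝ} (hg : Continuous g) :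
    ∫ s in (0:ℝ)..(2 * Real.pi), Real.cos s * g (Real.sin s) = 0 := by
  have h := intervalIntegral.integral_comp_smul_deriv
    (f := Real.sin) (f' := Real.cos) (g := g) (a := (0:ℝ)) (b := 2 * Real.pi)
    (fun x _ => Real.hasDerivAt_sin x) Real.continuous_cos.continuousOn hg
  simp only [smul_eq_mul, Function.comp] at h
  rw [h, Real.sin_two_pi, Real.sin_zero, intervalIntegral.integral_same]

lemma integral_sin_mul_comp_cos {g : ℝ → ℝ} (hg : Continuous g) :
    ∫ s in (0:ℝ)..(2 * Real.pi), Real.sin s * g (Real.cos s) = 0 := by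
  have h := intervalIntegral.integral_comp_smul_deriv
    (f := Real.cos) (f' := fun x => -Real.sin x) (g := g) (a := (0:ℝ)) (b := 2 * Real.pi)
    (fun x _ => Real.hasDerivAt_cos x) Real.continuous_sin.neg.continuousOn hg
  simp only [smul_eq_mul, Function.comp] at h
  rw [Real.cos_two_pi, Real.cos_zero, intervalIntegral.integral_same] at h
  have h2 : ∫ s in (0:ℝ)..(2 * Real.pi), Real.sin s * g (Real.cos s)
      = -∫ s in (0:ℝ)..(2 * Real.pi), -Real.sin s * g (Real.cos s) := by
    rw [← intervalIntegral.integral_neg]; congr 1; ext s; ring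
  rw [h2, h, neg_zero]

lemma integrand_nonneg (δ : ℝ) (hδ : 0 < δ) (u : ℝ) :
    0 ≤ Real.cos u ^ 2 * Real.sin u * phiTrans δ (Real.sin u) := by
  rw [mul_assoc]
  exact mul_nonneg (sq_nonneg _) (mul_phiTrans_nonneg δ _ hδ)

lemma I_pos (δ : ℝ) (hδ : 0 < δ) :
    0 < ∫ s in (0:ℝ)..(2 * Real.pi),
      Real.cos s ^ 2 * Real.sin s * phiTrans δ (Real.sin s) := by
  have hpi := Real.pi_pos
  have hcont : Continuous (fun s => Real.cos s ^ 2 * Real.sin s * phiTrans δ (Real.sin s)) :=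
    ((Real.continuous_cos.pow 2).mul Real.continuous_sin).mul
      ((phiTrans_cont δ hδ).comp Real.continuous_sin)
  have h1 : IntervalIntegrable (fun s => Real.cos s ^ 2 * Real.sin s * phiTrans δ (Real.sin s))
      MeasureTheory.volume 0 (Real.pi / 2) := hcont.intervalIntegrable _ _
  have h2 : IntervalIntegrable (fun s => Real.cos s ^ 2 * Real.sin s * phiTrans δ (Real.sin s))
      MeasureTheory.volume (Real.pi / 2) (2 * Real.pi) := hcont.intervalIntegrable _ _
  have hsplit := intervalIntegral.integral_add_adjacent_intervals h1 h2
  have pos1 : 0 < ∫ s in (0:ℝ)..(Real.pi / 2),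
      Real.cos s ^ 2 * Real.sin s * phiTrans δ (Real.sin s) := by
    apply intervalIntegral.intervalIntegral_pos_of_pos_on h1
    · intro x hx
      have hc : 0 < Real.cos x := Real.cos_pos_of_mem_Ioo ⟨by linarith [hx.1], hx.2⟩
      have hs : 0 < Real.sin x := Real.sin_pos_of_pos_of_lt_pi hx.1 (by linarith [hx.2])
      exact mul_pos (mul_pos (pow_pos hc 2) hs) (phiTrans_pos δ _ hδ hs)
    · linarith
  have nonneg2 : 0 ≤ ∫ s in (Real.pi / 2)..(2 * Real.pi),
      Real.cos s ^ 2 * Real.sin s * phiTrans δ (Real.sin s) := by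
    apply intervalIntegral.integral_nonneg (by linarith)
    intro u _
    exact integrand_nonneg δ hδ u
  linarith [hsplit]

/- STATEMENT 12: for h(cos s, sin s) = cos s, quadratic perturbations p± and constant
perturbations q± = b±, r± = c±:
(i) ∫₀^{2π} cos²s·sin s·φ_δ(sin s) ds > 0;
(ii) M_δ is affine in z with M_δ(z) − M_δ(0) = −(z/2)(a⁺₁₀₁ − a⁻₁₀₁)·∫₀^{2π} cos²s·sin s·φ_δ(sin s) ds;
(iii) if a⁺₁₀₁ ≠ a⁻₁₀₁ then M_δ has exactly one zero z₀, and M_δ'(z₀) ≠ 0. -/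
theorem stmt_12 (δ : ℝ) (hδ : 0 < δ)
    (ap200 ap020 ap002 ap110 ap101 ap011 am200 am020 am002 am110 am101 am011 bp bm cp cm : ℝ)
    (pp pm : ℝ → ℝ → ℝ → ℝ)
    (hpp : ∀ x y w : ℝ, pp x y w =
      ap200 * x ^ 2 + ap020 * y ^ 2 + ap002 * w ^ 2
        + ap110 * x * y + ap101 * x * w + ap011 * y * w)
    (hpm : ∀ x y w : ℝ, pm x y w =
      am200 * x ^ 2 + am020 * y ^ 2 + am002 * w ^ 2
        + am110 * x * y + am101 * x * w + am011 * y * w)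
    (Mδ : ℝ → ℝ)
    (hM : ∀ z : ℝ, Mδ z = ∫ s in (0:ℝ)..(2 * Real.pi),
      -(1 / 2) * (Real.cos s * (-(Real.cos s) * (bp + bm)
            + Real.sin s * (pp (Real.cos s) (Real.sin s) (z + Real.sin s)
                + pm (Real.cos s) (Real.sin s) (z + Real.sin s)))
          + (cp + cm)
          + (Real.cos s * (Real.cos s * (-bp + bm)
              + Real.sin s * (pp (Real.cos s) (Real.sin s) (z + Real.sin s)
                  - pm (Real.cos s) (Real.sin s) (z + Real.sin s)))
            + (cp - cm)) * phiTrans δ (Real.sin s))) :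
    (0 < ∫ s in (0:ℝ)..(2 * Real.pi),
      Real.cos s ^ 2 * Real.sin s * phiTrans δ (Real.sin s))
    ∧ (∀ z : ℝ, Mδ z - Mδ 0 = -(z / 2) * (ap101 - am101)
        * ∫ s in (0:ℝ)..(2 * Real.pi),
            Real.cos s ^ 2 * Real.sin s * phiTrans δ (Real.sin s))
    ∧ (ap101 ≠ am101 →
        ∃ z₀ : ℝ, Mδ z₀ = 0 ∧ deriv Mδ z₀ ≠ 0 ∧ ∀ z : ℝ, Mδ z = 0 → z = z₀) := by
  have hpp' : pp = fun x y w =>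
      ap200 * x ^ 2 + ap020 * y ^ 2 + ap002 * w ^ 2
        + ap110 * x * y + ap101 * x * w + ap011 * y * w := by
    funext x y w; exact hpp x y w
  have hpm' : pm = fun x y w =>
      am200 * x ^ 2 + am020 * y ^ 2 + am002 * w ^ 2
        + am110 * x * y + am101 * x * w + am011 * y * w := by
    funext x y w; exact hpm x y w
  subst hpp' hpm'
  simp only [] at hM
  have φc := phiTrans_cont δ hδ
  set I := ∫ s in (0:ℝ)..(2 * Real.pi),
      Real.cos s ^ 2 * Real.sin s * phiTrans δ (Real.sin s) with hIdef
  have hIpos : 0 < I := I_pos δ hδ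
  -- explicit integrand
  set F : ℝ → ℝ → ℝ := fun z s =>
      -(1 / 2) * (Real.cos s * (-(Real.cos s) * (bp + bm)
            + Real.sin s * ((ap200 * Real.cos s ^ 2 + ap020 * Real.sin s ^ 2
                  + ap002 * (z + Real.sin s) ^ 2 + ap110 * Real.cos s * Real.sin s
                  + ap101 * Real.cos s * (z + Real.sin s) + ap011 * Real.sin s * (z + Real.sin s))
                + (am200 * Real.cos s ^ 2 + am020 * Real.sin s ^ 2
                  + am002 * (z + Real.sin s) ^ 2 + am110 * Real.cos s * Real.sin s
                  + am101 * Real.cos s * (z + Real.sin s) + am011 * Real.sin s * (z + Real.sin s))))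
          + (cp + cm)
          + (Real.cos s * (Real.cos s * (-bp + bm)
              + Real.sin s * ((ap200 * Real.cos s ^ 2 + ap020 * Real.sin s ^ 2
                  + ap002 * (z + Real.sin s) ^ 2 + ap110 * Real.cos s * Real.sin s
                  + ap101 * Real.cos s * (z + Real.sin s) + ap011 * Real.sin s * (z + Real.sin s))
                - (am200 * Real.cos s ^ 2 + am020 * Real.sin s ^ 2
                  + am002 * (z + Real.sin s) ^ 2 + am110 * Real.cos s * Real.sin s
                  + am101 * Real.cos s * (z + Real.sin s) + am011 * Real.sin s * (z + Real.sin s))))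
            + (cp - cm)) * phiTrans δ (Real.sin s)) with hFdef
  have hMF : ∀ z : ℝ, Mδ z = ∫ s in (0:ℝ)..(2 * Real.pi), F z s := hM
  have hFcont : ∀ z : ℝ, Continuous (F z) := by
    intro z
    rw [hFdef]
    fun_prop
  have part2 : ∀ z : ℝ, Mδ z - Mδ 0 = -(z / 2) * (ap101 - am101) * I := by
    intro z
    set g : ℝ → ℝ := fun u =>
        (ap002 + am002) * z * u + (2 * (ap002 + am002) + (ap011 + am011)) * u ^ 2
          + (ap002 - am002) * z * (u * phiTrans δ u)
          + (2 * (ap002 - am002) + (ap011 - am011)) * (u ^ 2 * phiTrans δ u) with hgdef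
    have hgcont : Continuous g := by rw [hgdef]; fun_prop
    have hpt : ∀ s : ℝ, F z s - F 0 s
        = z * (-(1 / 2)) * (Real.cos s * g (Real.sin s)
            + (ap101 + am101) * (Real.sin s * Real.cos s ^ 2)
            + (ap101 - am101)
              * (Real.cos s ^ 2 * Real.sin s * phiTrans δ (Real.sin s))) := by
      intro s
      rw [hFdef, hgdef]
      ring
    have hA : Continuous (fun s => Real.cos s * g (Real.sin s)) :=
      Real.continuous_cos.mul (hgcont.comp Real.continuous_sin)
    have hB : Continuous (fun s => Real.sin s * Real.cos s ^ 2) := by fun_prop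
    have hC : Continuous (fun s => Real.cos s ^ 2 * Real.sin s * phiTrans δ (Real.sin s)) := by
      fun_prop
    have hintA : ∫ s in (0:ℝ)..(2 * Real.pi), Real.cos s * g (Real.sin s) = 0 :=
      integral_cos_mul_comp_sin hgcont
    have hintB : ∫ s in (0:ℝ)..(2 * Real.pi), Real.sin s * Real.cos s ^ 2 = 0 := by
      have := integral_sin_mul_comp_cos (g := fun u => u ^ 2) (by fun_prop)
      simpa using this
    calc Mδ z - Mδ 0
        = ∫ s in (0:ℝ)..(2 * Real.pi), (F z s - F 0 s) := by
          rw [hMF z, hMF 0,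
            intervalIntegral.integral_sub ((hFcont z).intervalIntegrable _ _)
              ((hFcont 0).intervalIntegrable _ _)]
      _ = ∫ s in (0:ℝ)..(2 * Real.pi), z * (-(1 / 2)) * (Real.cos s * g (Real.sin s)
            + (ap101 + am101) * (Real.sin s * Real.cos s ^ 2)
            + (ap101 - am101)
              * (Real.cos s ^ 2 * Real.sin s * phiTrans δ (Real.sin s))) := by
          simp only [hpt]
      _ = z * (-(1 / 2)) * ∫ s in (0:ℝ)..(2 * Real.pi), (Real.cos s * g (Real.sin s)
            + (ap101 + am101) * (Real.sin s * Real.cos s ^ 2)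
            + (ap101 - am101)
              * (Real.cos s ^ 2 * Real.sin s * phiTrans δ (Real.sin s))) := by
          rw [intervalIntegral.integral_const_mul]
      _ = z * (-(1 / 2)) * ((∫ s in (0:ℝ)..(2 * Real.pi), Real.cos s * g (Real.sin s))
            + ((ap101 + am101) * ∫ s in (0:ℝ)..(2 * Real.pi), Real.sin s * Real.cos s ^ 2)
            + ((ap101 - am101) * I)) := by
          rw [intervalIntegral.integral_add
              ((show Continuous (fun s => Real.cos s * g (Real.sin s)
                  + (ap101 + am101) * (Real.sin s * Real.cos s ^ 2)) from
                hA.add (continuous_const.mul hB)).intervalIntegrable _ _)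
              ((show Continuous (fun s => (ap101 - am101)
                  * (Real.cos s ^ 2 * Real.sin s * phiTrans δ (Real.sin s))) from
                continuous_const.mul hC).intervalIntegrable _ _),
            intervalIntegral.integral_add (hA.intervalIntegrable _ _)
              ((show Continuous (fun s => (ap101 + am101) * (Real.sin s * Real.cos s ^ 2)) from
                continuous_const.mul hB).intervalIntegrable _ _),
            intervalIntegral.integral_const_mul, intervalIntegral.integral_const_mul,
            ← hIdef]
      _ = -(z / 2) * (ap101 - am101) * I := by
          rw [hintA, hintB]; ring
  refine ⟨hIpos, part2, ?_⟩
  intro hne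
  set k : ℝ := -(1 / 2) * (ap101 - am101) * I with hkdef
  have hk : k ≠ 0 := by
    rw [hkdef]
    have h1 : ap101 - am101 ≠ 0 := sub_ne_zero.2 hne
    exact mul_ne_zero (mul_ne_zero (by norm_num) h1) (ne_of_gt hIpos)
  have hMz : ∀ z : ℝ, Mδ z = Mδ 0 + k * z := by
    intro z
    have h := part2 z
    have h2 : -(z / 2) * (ap101 - am101) * I = k * z := by rw [hkdef]; ring
    linarith [h.trans h2]
  obtain ⟨z₀, hz₀⟩ : ∃ z₀ : ℝ, z₀ = -(Mδ 0) / k := ⟨_, rfl⟩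
  refine ⟨z₀, ?_, ?_, ?_⟩
  · rw [hMz, hz₀]; field_simp; ring
  · have hfun : Mδ = fun z => Mδ 0 + k * z := funext hMz
    have hd : HasDerivAt (fun z : ℝ => Mδ 0 + k * z) k z₀ := by
      simpa using ((hasDerivAt_id z₀).const_mul k).const_add (Mδ 0)
    have hd2 : HasDerivAt Mδ k z₀ := by rw [hfun]; exact hd
    rw [hd2.deriv]
    exact hk
  · intro z hz
    have h1 := hMz z
    rw [hz] at h1
    have h2 : k * z = -(Mδ 0) := by linarith
    rw [hz₀, eq_div_iff hk]
    linear_combination h2
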